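/- Let K be a field, q a primitive 3rd root of unity, and let B_*(1) = ⊕_d B_d(1) with basis e^{k₁}⊗e^{k₂}⊗e^{k₃}, the differential δ as above, and the product (e^{i₁}⊗e^{i₂}⊗e^{i₃})·(e^{k₁}⊗e^{k₂}⊗e^{k₃}) = q^{c} · e^{i₁+k₁}⊗e^{i₂+k₂}⊗e^{i₃+k₃} for an appropriate scalar q^c depending on the exponents. Then for fixed k₁, k₂, k₃ with 3 | k₁ and 3 | k₂, the element e^{k₁}⊗e^{k₂}⊗e^{k₃} satisfies δ(e^{k₁}⊗e^{k₂}⊗e^{k₃}) = 0, and right multiplication by it defines an injective morphism of 3-complexes B_d(1)[k₂+2k₃] → B_{d+k₁+k₂+k₃}(1), where [t] denotes the degree shift by t. -/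

import Mathlib

/-- The quantum integer `[m]_t = 1 + t + ⋯ + t^{m-1}`. -/
def qInt {K : Type} [Field K] (t : K) (m : ℕ) : K := ∑ i ∈ Finset.range m, t ^ i

/-- The Gaussian (quantum) binomial coefficient, defined by the q-Pascal recurrence
`binom(n+1,k+1)_t = binom(n,k)_t + t^{k+1} binom(n,k+1)_t`. -/
def gaussBinom {K : Type} [Field K] (t : K) : ℕ → ℕ → K
  | _, 0 => 1
  | 0, _ + 1 => 0
  | n + 1, k + 1 => gaussBinom t n k + t ^ (k + 1) * gaussBinom t n (k + 1)

/-- The total space of `B_*(1)`: the free vector space on basis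
`e^{k₁} ⊗ e^{k₂} ⊗ e^{k₃}`, indexed by triples `(k₁,k₂,k₃)`. -/
abbrev BV (K : Type) [Field K] : Type := (ℕ × ℕ × ℕ) →₀ K

/-- The 3-differential `δ` of the quantum Troesch complex at `n = 1`:
`δ(e^{k₁}⊗e^{k₂}⊗e^{k₃}) = [k₁]_{q²} e^{k₁-1}⊗e^{k₂+1}⊗e^{k₃}
  + q^{2k₂}[k₂]_{q²} e^{k₁}⊗e^{k₂-1}⊗e^{k₃+1}`
(the quantum-integer coefficients vanish when the corresponding exponent is 0). -/
noncomputable def deltaV {K : Type} [Field K] (q : K) : BV K →ₗ[K] BV K :=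
  Finsupp.linearCombination K (fun k : ℕ × ℕ × ℕ =>
    qInt (q ^ 2) k.1 • Finsupp.single (k.1 - 1, k.2.1 + 1, k.2.2) (1 : K)
    + (q ^ (2 * k.2.1) * qInt (q ^ 2) k.2.1) •
        Finsupp.single (k.1, k.2.1 - 1, k.2.2 + 1) (1 : K))

/-- A product on `B_*(1)` given on basis elements by coordinatewise addition of
exponents up to a power of `q`: `(e^{j})·(e^{k}) = q^{c j k} e^{j+k}`. -/
noncomputable def mulV {K : Type} [Field K] (q : K) (c : ℕ × ℕ × ℕ → ℕ × ℕ × ℕ → ℕ) :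
    BV K →ₗ[K] BV K →ₗ[K] BV K :=
  Finsupp.linearCombination K (fun j : ℕ × ℕ × ℕ =>
    Finsupp.linearCombination K (fun k : ℕ × ℕ × ℕ =>
      (q ^ (c j k)) • Finsupp.single (j + k) (1 : K)))

/-- assume the product satisfies the Leibniz rule
`δ(ab) = δ(a)b + q^{2·deg a} a δ(b)` on basis elements.  If `3 ∣ k₁` and `3 ∣ k₂`,
then `δ(e^{k₁}⊗e^{k₂}⊗e^{k₃}) = 0`, and right multiplication by `e^{k₁}⊗e^{k₂}⊗e^{k₃}`
is an injective morphism of 3-complexes `B_d(1)[k₂+2k₃] → B_{d+k₁+k₂+k₃}(1)`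
(on the total space: it is injective and commutes with `δ`). -/
theorem rightMul_is_complex_morphism {K : Type} [Field K] (q : K)
    (hq : IsPrimitiveRoot q 3) (c : ℕ × ℕ × ℕ → ℕ × ℕ × ℕ → ℕ)
    (hLeibniz : ∀ j k : ℕ × ℕ × ℕ,
      deltaV q (mulV q c (Finsupp.single j (1 : K)) (Finsupp.single k (1 : K)))
        = mulV q c (deltaV q (Finsupp.single j (1 : K))) (Finsupp.single k (1 : K))
          + q ^ (2 * (j.2.1 + 2 * j.2.2)) •
            mulV q c (Finsupp.single j (1 : K)) (deltaV q (Finsupp.single k (1 : K))))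
    (k₁ k₂ k₃ : ℕ) (h1 : 3 ∣ k₁) (h2 : 3 ∣ k₂) :
    deltaV q (Finsupp.single ((k₁, k₂, k₃) : ℕ × ℕ × ℕ) (1 : K)) = 0 ∧
    Function.Injective ((mulV q c).flip (Finsupp.single ((k₁, k₂, k₃) : ℕ × ℕ × ℕ) (1 : K))) ∧
    (deltaV q).comp ((mulV q c).flip (Finsupp.single ((k₁, k₂, k₃) : ℕ × ℕ × ℕ) (1 : K)))
      = ((mulV q c).flip (Finsupp.single ((k₁, k₂, k₃) : ℕ × ℕ × ℕ) (1 : K))).comp (deltaV q) := by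
  classical
  have hq3 : q ^ 3 = 1 := hq.pow_eq_one
  have hq0 : q ≠ 0 := by
    intro h; rw [h] at hq3; simp at hq3
  have hq2 : q ^ 2 ≠ 1 := hq.pow_ne_one_of_pos_of_lt (by norm_num) (by norm_num)
  have hqI : ∀ m : ℕ, 3 ∣ m → qInt (q ^ 2) m = 0 := by
    rintro m ⟨t, rfl⟩
    rw [qInt, geom_sum_eq hq2]
    have : (q ^ 2) ^ (3 * t) = 1 := by
      rw [← pow_mul, show 2 * (3 * t) = 3 * (2 * t) by ring, pow_mul, hq3, one_pow]
    simp [this]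
  have hdelta : deltaV q (Finsupp.single ((k₁, k₂, k₃) : ℕ × ℕ × ℕ) (1 : K)) = 0 := by
    simp [deltaV, Finsupp.linearCombination_single, hqI _ h1, hqI _ h2]
  set k : ℕ × ℕ × ℕ := (k₁, k₂, k₃) with hk
  have key : ∀ (a : BV K) (j : ℕ × ℕ × ℕ),
      (mulV q c a (Finsupp.single k (1 : K))) (j + k) = q ^ (c j k) * a j := by
    intro a j
    induction a using Finsupp.induction_linear with
    | zero => simp
    | add f g hf hg => simp [hf, hg, mul_add]
    | single j₀ r =>
      have : mulV q c (Finsupp.single j₀ r) (Finsupp.single k (1 : K))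
          = r • ((q ^ (c j₀ k)) • Finsupp.single (j₀ + k) (1 : K)) := by
        simp [mulV, Finsupp.linearCombination_single]
      rw [this]
      simp only [Finsupp.coe_smul, Pi.smul_apply, smul_eq_mul, Finsupp.single_apply,
        add_left_inj]
      by_cases h : j₀ = j
      · subst h; simp [mul_comm]
      · simp [h, mul_comm]
  refine ⟨hdelta, ?_, ?_⟩
  · intro a b hab
    ext j
    have h1 := key a j
    have h2 := key b j
    simp only [LinearMap.flip_apply] at hab
    rw [hab] at h1
    rw [h2] at h1
    exact (mul_left_cancel₀ (pow_ne_zero _ hq0) h1.symm)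
  · ext j : 2
    simp only [LinearMap.coe_comp, Function.comp_apply, LinearMap.flip_apply,
      Finsupp.lsingle_apply]
    rw [hLeibniz j k, hdelta]
    simp
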